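/- Let (T_i) be i.i.d. random variables with 1 ≤ T_i ≤ N and E[T_1] ≥ c√N for some c > 0. Let M = ⌊2N²/E[T_1]⌋ + 1 and L = max{k : T_1 + ... + T_k ≤ N²}. Then E[L] ≤ M + N²·P(T_1 + ... + T_M ≤ N²), and P(T_1 + ... + T_M ≤ N²) ≤ M·E[T_1²]/N⁴, so E[L] ≤ C·N^{3/2} for a constant C depending only on c. -/

import Mathlib

open MeasureTheory ProbabilityTheory Finset

/-- Renewal-theoretic estimate: for i.i.d. `T_i` with `1 ≤ T_i ≤ N` and
`E[T₁] ≥ c√N`, setting `M = ⌊2N²/E[T₁]⌋ + 1` and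
`L = max{k : T₁ + ⋯ + T_k ≤ N²}`, one has
`E[L] ≤ M + N² P(T₁ + ⋯ + T_M ≤ N²)`, `P(T₁ + ⋯ + T_M ≤ N²) ≤ M E[T₁²]/N⁴`,
and hence `E[L] ≤ C N^{3/2}` with `C` depending only on `c`. -/
theorem stmt_14 (c : ℝ) (hc : 0 < c) :
    ∃ C : ℝ, 0 < C ∧
      ∀ (Ω : Type) (mΩ : MeasurableSpace Ω) (μ : Measure Ω), IsProbabilityMeasure μ →
      ∀ (T : ℕ → Ω → ℝ), (∀ i, Measurable (T i)) →
        iIndepFun T μ →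
        (∀ i, IdentDistrib (T i) (T 0) μ μ) →
        ∀ N : ℕ, 1 ≤ N →
        (∀ i, ∀ ω, 1 ≤ T i ω ∧ T i ω ≤ N) →
        c * Real.sqrt N ≤ ∫ ω, T 0 ω ∂μ →
        ∀ M : ℕ, M = ⌊2 * (N : ℝ) ^ 2 / ∫ ω, T 0 ω ∂μ⌋₊ + 1 →
        ∀ L : Ω → ℕ,
          (∀ ω, L ω = sSup {k : ℕ | ∑ i ∈ range k, T i ω ≤ (N : ℝ) ^ 2}) →
        (∫ ω, (L ω : ℝ) ∂μ
            ≤ M + N ^ 2 * (μ {ω | ∑ i ∈ range M, T i ω ≤ (N : ℝ) ^ 2}).toReal) ∧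
        ((μ {ω | ∑ i ∈ range M, T i ω ≤ (N : ℝ) ^ 2}).toReal
            ≤ M * (∫ ω, (T 0 ω) ^ 2 ∂μ) / N ^ 4) ∧
        (∫ ω, (L ω : ℝ) ∂μ ≤ C * (N : ℝ) ^ ((3 : ℝ) / 2)) := by
  refine ⟨4 / c + 2, by positivity, ?_⟩
  intro Ω mΩ μ hprob T hmeas hindep hident N hN hbound hE M hM L hL
  set E : ℝ := ∫ ω, T 0 ω ∂μ with hEdef
  have hNpos : (0:ℝ) < N := by exact_mod_cast hN
  have hsqrt : (0:ℝ) < Real.sqrt N := Real.sqrt_pos.mpr hNpos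
  have hEpos : 0 < E := lt_of_lt_of_le (by positivity) hE
  have hT1 : ∀ i ω, 1 ≤ T i ω := fun i ω => (hbound i ω).1
  have hTN : ∀ i ω, T i ω ≤ N := fun i ω => (hbound i ω).2
  have hT0 : ∀ i ω, 0 ≤ T i ω := fun i ω => le_trans zero_le_one (hT1 i ω)
  have hTint : ∀ i, Integrable (T i) μ := by
    intro i
    refine (integrable_const (N:ℝ)).mono' (hmeas i).aestronglyMeasurable ?_
    filter_upwards with ω
    rw [Real.norm_eq_abs, abs_of_nonneg (hT0 i ω)]; exact hTN i ω
  have hTmem2 : ∀ i, MemLp (T i) 2 μ := by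
    intro i
    refine (memLp_top_of_bound (hmeas i).aestronglyMeasurable (N:ℝ) ?_).mono_exponent le_top
    filter_upwards with ω
    rw [Real.norm_eq_abs, abs_of_nonneg (hT0 i ω)]; exact hTN i ω
  have hEi : ∀ i, ∫ ω, T i ω ∂μ = E := fun i => (hident i).integral_eq
  set S : ℕ → Ω → ℝ := fun k ω => ∑ i ∈ range k, T i ω with hSdef
  have hSmono : ∀ (ω : Ω) ⦃j k : ℕ⦄, j ≤ k → S j ω ≤ S k ω := by
    intro ω j k hjk
    exact Finset.sum_le_sum_of_subset_of_nonneg (Finset.range_subset_range.mpr hjk)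
      (fun i _ _ => hT0 i ω)
  have hSk : ∀ (k : ℕ) (ω : Ω), (k:ℝ) ≤ S k ω := by
    intro k ω
    calc (k:ℝ) = ∑ _i ∈ range k, (1:ℝ) := by simp
    _ ≤ S k ω := Finset.sum_le_sum (fun i _ => hT1 i ω)
  have hbdd : ∀ ω : Ω, BddAbove {k : ℕ | ∑ i ∈ range k, T i ω ≤ (N:ℝ)^2} := by
    intro ω
    refine ⟨N^2, fun k hk => ?_⟩
    have h1 : (k:ℝ) ≤ (N:ℝ)^2 := le_trans (hSk k ω) hk
    exact_mod_cast h1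
  have hLiff : ∀ (ω : Ω) (n : ℕ), n ≤ L ω ↔ S n ω ≤ (N:ℝ)^2 := by
    intro ω n
    constructor
    · intro hn
      have hmem := Nat.sSup_mem (s := {k : ℕ | ∑ i ∈ range k, T i ω ≤ (N:ℝ)^2})
        ⟨0, by simp⟩ (hbdd ω)
      rw [← hL ω] at hmem
      exact le_trans (hSmono ω hn) hmem
    · intro hn
      rw [hL ω]
      exact le_csSup (hbdd ω) hn
  have hLle : ∀ ω, (L ω : ℝ) ≤ (N:ℝ)^2 :=
    fun ω => le_trans (hSk _ ω) ((hLiff ω (L ω)).mp le_rfl)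
  have hSmeas : ∀ k, Measurable (S k) := fun k => Finset.measurable_sum _ (fun i _ => hmeas i)
  have hUp : ∀ m : ℕ, MeasurableSet {ω | m ≤ L ω} := by
    intro m
    have h1 : {ω | m ≤ L ω} = {ω | S m ω ≤ (N:ℝ)^2} := Set.ext fun ω => hLiff ω m
    rw [h1]
    exact measurableSet_le (hSmeas m) measurable_const
  have hLmeas : Measurable L := by
    apply measurable_to_countable'
    intro n
    have h1 : L ⁻¹' {n} = {ω | n ≤ L ω} \ {ω | n+1 ≤ L ω} := by
      ext ω
      simp only [Set.mem_preimage, Set.mem_singleton_iff, Set.mem_diff, Set.mem_setOf_eq]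
      omega
    rw [h1]; exact (hUp n).diff (hUp (n+1))
  have hLint : Integrable (fun ω => (L ω : ℝ)) μ := by
    refine (integrable_const ((N:ℝ)^2)).mono'
      (measurable_from_top.comp hLmeas).aestronglyMeasurable ?_
    filter_upwards with ω
    rw [Real.norm_eq_abs, abs_of_nonneg (by positivity)]
    exact hLle ω
  set A : Set Ω := {ω | ∑ i ∈ range M, T i ω ≤ (N:ℝ)^2} with hAdef
  have hAmeas : MeasurableSet A := measurableSet_le (hSmeas M) measurable_const
  -- Part 1
  have hpoint : ∀ ω, (L ω : ℝ) ≤ (M:ℝ) + (N:ℝ)^2 * A.indicator (fun _ => (1:ℝ)) ω := by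
    intro ω
    by_cases hA : ω ∈ A
    · rw [Set.indicator_of_mem hA]
      have hMnn : (0:ℝ) ≤ (M:ℝ) := Nat.cast_nonneg M
      nlinarith [hLle ω]
    · rw [Set.indicator_of_notMem hA, mul_zero, add_zero]
      have h1 : L ω ≤ M := by
        by_contra h
        push_neg at h
        exact hA ((hLiff ω M).mp h.le)
      exact_mod_cast h1
  have hIndInt : Integrable (fun ω => (N:ℝ)^2 * A.indicator (fun _ => (1:ℝ)) ω) μ :=
    ((integrable_const (1:ℝ)).indicator hAmeas).const_mul _
  have part1 : ∫ ω, (L ω : ℝ) ∂μ ≤ (M:ℝ) + (N:ℝ)^2 * (μ A).toReal := by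
    have hInt2 : Integrable (fun ω => (M:ℝ) + (N:ℝ)^2 * A.indicator (fun _ => (1:ℝ)) ω) μ :=
      (integrable_const ((M:ℝ))).add hIndInt
    have h2 := integral_mono hLint hInt2 hpoint
    rw [integral_add (integrable_const _) hIndInt, integral_const, integral_const_mul,
      integral_indicator_const _ hAmeas] at h2
    simpa [measure_univ, measureReal_def] using h2
  -- Part 2 : Chebyshev
  have hSfmem : MemLp (∑ i ∈ range M, T i) 2 μ := memLp_finset_sum' _ (fun i _ => hTmem2 i)
  have hSfint : (∫ ω, (∑ i ∈ range M, T i) ω ∂μ) = M * E := by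
    simp only [Finset.sum_apply]
    rw [integral_finset_sum _ (fun i _ => hTint i)]
    simp [hEi, Finset.sum_const, card_range, nsmul_eq_mul]
  have hME : 2 * (N:ℝ)^2 ≤ M * E := by
    have h1 : 2*(N:ℝ)^2 / E < (M:ℝ) := by
      rw [hM]; push_cast; exact Nat.lt_floor_add_one _
    have h2 : 2*(N:ℝ)^2 = (2*(N:ℝ)^2/E) * E := by field_simp
    nlinarith
  have hsub : A ⊆ {ω | (N:ℝ)^2 ≤ |(∑ i ∈ range M, T i) ω - ∫ x, (∑ i ∈ range M, T i) x ∂μ|} := by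
    intro ω hω
    have hω' : (∑ i ∈ range M, T i) ω ≤ (N:ℝ)^2 := by
      rw [Finset.sum_apply]; exact hω
    simp only [Set.mem_setOf_eq]
    rw [hSfint, abs_sub_comm, abs_of_nonneg (by nlinarith)]
    nlinarith
  have hcheb := meas_ge_le_variance_div_sq (μ := μ) hSfmem
    (show (0:ℝ) < (N:ℝ)^2 by positivity)
  have hAle : μ A ≤ ENNReal.ofReal (variance (∑ i ∈ range M, T i) μ / ((N:ℝ)^2)^2) :=
    le_trans (measure_mono hsub) hcheb
  have hvarsum : variance (∑ i ∈ range M, T i) μ = ∑ i ∈ range M, variance (T i) μ :=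
    IndepFun.variance_sum (fun i _ => hTmem2 i)
      (fun i _ j _ hij => hindep.indepFun hij)
  have hvar0 : variance (T 0) μ ≤ ∫ ω, (T 0 ω)^2 ∂μ := by
    have h1 := variance_le_expectation_sq (μ := μ) (hmeas 0).aestronglyMeasurable
    simpa using h1
  have hQnn : 0 ≤ ∫ ω, (T 0 ω)^2 ∂μ := integral_nonneg (fun ω => sq_nonneg _)
  have hvarb : variance (∑ i ∈ range M, T i) μ ≤ (M:ℝ) * ∫ ω, (T 0 ω)^2 ∂μ := by
    rw [hvarsum]
    calc ∑ i ∈ range M, variance (T i) μ ≤ ∑ _i ∈ range M, ∫ ω, (T 0 ω)^2 ∂μ :=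
      Finset.sum_le_sum (fun i _ => le_trans (le_of_eq ((hident i).variance_eq)) hvar0)
    _ = (M:ℝ) * ∫ ω, (T 0 ω)^2 ∂μ := by
      simp [Finset.sum_const, card_range, nsmul_eq_mul]
  have part2 : (μ A).toReal ≤ (M:ℝ) * (∫ ω, (T 0 ω)^2 ∂μ) / (N:ℝ)^4 := by
    have h1 : (μ A).toReal ≤ variance (∑ i ∈ range M, T i) μ / ((N:ℝ)^2)^2 := by
      have h2 := ENNReal.toReal_mono (ENNReal.ofReal_ne_top) hAle
      rwa [ENNReal.toReal_ofReal (div_nonneg (variance_nonneg _ _) (by positivity))] at h2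
    calc (μ A).toReal ≤ variance (∑ i ∈ range M, T i) μ / ((N:ℝ)^2)^2 := h1
    _ ≤ ((M:ℝ) * ∫ ω, (T 0 ω)^2 ∂μ) / ((N:ℝ)^2)^2 := by gcongr
    _ = (M:ℝ) * (∫ ω, (T 0 ω)^2 ∂μ) / (N:ℝ)^4 := by ring
  -- Part 3
  have hQle : ∫ ω, (T 0 ω)^2 ∂μ ≤ (N:ℝ)^2 := by
    have h0 : ∫ (_ : Ω), ((N:ℝ)^2) ∂μ = (N:ℝ)^2 := by simp
    rw [← h0]
    refine integral_mono ?_ (integrable_const _) (fun ω => ?_)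
    · exact (hTmem2 0).integrable_sq
    · nlinarith [hT0 0 ω, hTN 0 ω]
  have hrp : (0:ℝ) < (N:ℝ)^((3:ℝ)/2) := Real.rpow_pos_of_pos hNpos _
  have hone : (1:ℝ) ≤ (N:ℝ)^((3:ℝ)/2) :=
    Real.one_le_rpow (by exact_mod_cast hN) (by norm_num)
  have hkey : (N:ℝ)^((3:ℝ)/2) * Real.sqrt N = (N:ℝ)^2 := by
    rw [Real.sqrt_eq_rpow, ← Real.rpow_add hNpos]
    norm_num
  have hMb : (M:ℝ) ≤ (2/c + 1) * (N:ℝ)^((3:ℝ)/2) := by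
    have hx : (0:ℝ) ≤ 2*(N:ℝ)^2 / E := by positivity
    have h1 : (M:ℝ) ≤ 2*(N:ℝ)^2/E + 1 := by
      rw [hM]; push_cast; linarith [Nat.floor_le hx]
    have h2 : 2*(N:ℝ)^2/E ≤ 2*(N:ℝ)^2/(c*Real.sqrt N) := by
      gcongr
    have h3 : 2*(N:ℝ)^2/(c*Real.sqrt N) = (2/c) * (N:ℝ)^((3:ℝ)/2) := by
      rw [← hkey]; field_simp
    nlinarith
  have part3 : ∫ ω, (L ω : ℝ) ∂μ ≤ (4/c + 2) * (N:ℝ)^((3:ℝ)/2) := by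
    have hstep : (N:ℝ)^2 * (μ A).toReal ≤ (M:ℝ) := by
      calc (N:ℝ)^2 * (μ A).toReal
          ≤ (N:ℝ)^2 * ((M:ℝ) * (∫ ω, (T 0 ω)^2 ∂μ) / (N:ℝ)^4) := by
            exact mul_le_mul_of_nonneg_left part2 (by positivity)
        _ ≤ (N:ℝ)^2 * ((M:ℝ) * (N:ℝ)^2 / (N:ℝ)^4) := by
            gcongr
        _ = (M:ℝ) := by field_simp
    have h1 : ∫ ω, (L ω : ℝ) ∂μ ≤ 2 * (M:ℝ) := by linarith
    calc ∫ ω, (L ω : ℝ) ∂μ ≤ 2 * (M:ℝ) := h1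
    _ ≤ 2 * ((2/c + 1) * (N:ℝ)^((3:ℝ)/2)) := by linarith
    _ = (4/c + 2) * (N:ℝ)^((3:ℝ)/2) := by ring
  exact ⟨by exact_mod_cast part1, by exact_mod_cast part2, part3⟩
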